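/- arXiv:1705.05827 — 3 statements merged into one kernel-verified Lean document; each statement's English description precedes it below -/
import Mathlib

section
/- Let K be a retract of a group G under retraction φ (a homomorphism φ: G → G with image K fixing K pointwise), and let L, R be nonempty subsets of G. Then 2S(G;L,R) is weakly connected if and only if 2S(K;φ(L),φ(R)) is weakly connected and every element of ker φ is weakly connected to the identity within 2S(G;L,R). -/
open Relation

/-- `w` is a product of a list of `n` elements of `S`. -/
def IsWord {G : Type*} [Group G] (S : Set G) (n : ℕ) (w : G) : Prop :=
  ∃ l : List G, l.length = n ∧ (∀ x ∈ l, x ∈ S) ∧ l.prod = w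

/-- The set of all positive-length words in `S`. -/
def WordSet {G : Type*} [Group G] (S : Set G) : Set G :=
  {w | ∃ n : ℕ, 0 < n ∧ IsWord S n w}

/-- Arc of the two-sided group digraph `2S(G;L,R)`. -/
def Arc {G : Type*} [Group G] (L R : Set G) (g h : G) : Prop :=
  ∃ l ∈ L, ∃ r ∈ R, h = l⁻¹ * g * r

/-- Existence of a directed path (possibly of length 0). -/
def DPath {G : Type*} [Group G] (L R : Set G) : G → G → Prop :=
  ReflTransGen (Arc L R)

/-- Weak connectivity: path ignoring directions. -/
def WeakConn {G : Type*} [Group G] (L R : Set G) : G → G → Prop :=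
  ReflTransGen (fun g h => Arc L R g h ∨ Arc L R h g)

/-- Strong connectivity of two vertices. -/
def StrongConn {G : Type*} [Group G] (L R : Set G) (g h : G) : Prop :=
  DPath L R g h ∧ DPath L R h g

theorem stmt_15 {G : Type*} [Group G] (K : Subgroup G) (φ : G →* G)
    (hrange : ∀ g : G, φ g ∈ K) (hfix : ∀ k ∈ K, φ k = k)
    (L R : Set G) (hL : L.Nonempty) (hR : R.Nonempty) :
    (∀ g h : G, WeakConn L R g h) ↔
      ((∀ x y : K, Relation.ReflTransGen (fun a b : K =>
          (∃ l ∈ L, ∃ r ∈ R, (b : G) = (φ l)⁻¹ * (a : G) * φ r) ∨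
          (∃ l ∈ L, ∃ r ∈ R, (a : G) = (φ l)⁻¹ * (b : G) * φ r)) x y) ∧
       ∀ h : G, φ h = 1 → WeakConn L R h 1) := by
  constructor
  · intro hconn
    refine ⟨fun x y => ?_, fun h _ => hconn h 1⟩
    have hstep : ∀ a b : G, (Arc L R a b ∨ Arc L R b a) →
        ((∃ l ∈ L, ∃ r ∈ R, ((⟨φ b, hrange b⟩ : K) : G) = (φ l)⁻¹ * ((⟨φ a, hrange a⟩ : K) : G) * φ r) ∨
         (∃ l ∈ L, ∃ r ∈ R, ((⟨φ a, hrange a⟩ : K) : G) = (φ l)⁻¹ * ((⟨φ b, hrange b⟩ : K) : G) * φ r)) := by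
      intro a b hab
      rcases hab with ⟨l, hl, r, hr, rfl⟩ | ⟨l, hl, r, hr, hba⟩
      · exact Or.inl ⟨l, hl, r, hr, by simp⟩
      · exact Or.inr ⟨l, hl, r, hr, by simp [hba]⟩
    have hlift := Relation.ReflTransGen.lift
      (p := fun a b : K =>
          (∃ l ∈ L, ∃ r ∈ R, (b : G) = (φ l)⁻¹ * (a : G) * φ r) ∨
          (∃ l ∈ L, ∃ r ∈ R, (a : G) = (φ l)⁻¹ * (b : G) * φ r))
      (fun g : G => (⟨φ g, hrange g⟩ : K))
      (fun a b hab => hstep a b hab) _ _ (hconn x y)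
    have hx : (⟨φ (x : G), hrange _⟩ : K) = x := Subtype.ext (hfix _ x.2)
    have hy : (⟨φ (y : G), hrange _⟩ : K) = y := Subtype.ext (hfix _ y.2)
    simpa only [Function.onFun, hx, hy] using hlift
  · rintro ⟨hK, hker⟩
    have lift : ∀ (x y : K), Relation.ReflTransGen (fun a b : K =>
          (∃ l ∈ L, ∃ r ∈ R, (b : G) = (φ l)⁻¹ * (a : G) * φ r) ∨
          (∃ l ∈ L, ∃ r ∈ R, (a : G) = (φ l)⁻¹ * (b : G) * φ r)) x y →
        ∀ g : G, φ g = (x : G) → ∃ h : G, φ h = (y : G) ∧ WeakConn L R g h := by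
      intro x y hxy
      induction hxy with
      | refl => exact fun g hg => ⟨g, hg, Relation.ReflTransGen.refl⟩
      | @tail b c _ harc ih =>
        intro g hg
        obtain ⟨h, hh, hgh⟩ := ih g hg
        rcases harc with ⟨l, hl, r, hr, hc⟩ | ⟨l, hl, r, hr, hb⟩
        · refine ⟨l⁻¹ * h * r, ?_, hgh.tail (Or.inl ⟨l, hl, r, hr, rfl⟩)⟩
          rw [map_mul, map_mul, map_inv, hh, ← hc]
        · refine ⟨l * h * r⁻¹, ?_, hgh.tail (Or.inr ⟨l, hl, r, hr, by group⟩)⟩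
          rw [map_mul, map_mul, map_inv, hh, hb]
          group
    have hone : ∀ g : G, WeakConn L R g 1 := by
      intro g
      obtain ⟨h, hh, hgh⟩ := lift ⟨φ g, hrange g⟩ 1 (hK _ _) g rfl
      exact hgh.trans (hker h (by simpa using hh))
    have hsymm : Symmetric (fun g h : G => Arc L R g h ∨ Arc L R h g) :=
      fun a b hab => hab.symm
    intro g h
    exact (hone g).trans ((@Relation.ReflTransGen.stdSymm _ _ ⟨fun a b => @hsymm a b⟩).symm _ _ (hone h))
end

section
/- Let N be a normal subgroup of G and φ: G → G/N the canonical projection. Then 2S(G;L,R) is weakly connected if and only if 2S(G/N;φ(L),φ(R)) is weakly connected and every element of N is weakly connected to the identity within 2S(G;L,R). -/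
open Relation

theorem stmt_16 {G : Type*} [Group G] (N : Subgroup G) [N.Normal]
    (L R : Set G) (hL : L.Nonempty) (hR : R.Nonempty) :
    (∀ g h : G, WeakConn L R g h) ↔
      ((∀ x y : G ⧸ N, Relation.ReflTransGen (fun a b : G ⧸ N =>
          (∃ l ∈ L, ∃ r ∈ R, b = ((l : G ⧸ N))⁻¹ * a * (r : G ⧸ N)) ∨
          (∃ l ∈ L, ∃ r ∈ R, a = ((l : G ⧸ N))⁻¹ * b * (r : G ⧸ N))) x y) ∧
       ∀ h ∈ N, WeakConn L R h 1) := by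
  have hsym : Symmetric (WeakConn L R) :=
    fun a b hab => by
      haveI : Std.Symm (fun g h : G => Arc L R g h ∨ Arc L R h g) := ⟨fun _ _ h => Or.symm h⟩
      exact Std.Symm.symm (r := ReflTransGen (fun g h : G => Arc L R g h ∨ Arc L R h g)) a b hab
  constructor
  · intro hconn
    refine ⟨?_, fun h _ => hconn h 1⟩
    intro x y
    induction x using QuotientGroup.induction_on with
    | H g =>
    induction y using QuotientGroup.induction_on with
    | H h =>
    refine ReflTransGen.lift (QuotientGroup.mk : G → G ⧸ N) ?_ g h (hconn g h)
    rintro a b (⟨l, hl, r, hr, rfl⟩ | ⟨l, hl, r, hr, rfl⟩)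
    · exact Or.inl ⟨l, hl, r, hr, by simp⟩
    · exact Or.inr ⟨l, hl, r, hr, by simp⟩
  · rintro ⟨hq, hN⟩ g h
    -- lifting lemma
    have lift : ∀ x y : G ⧸ N, Relation.ReflTransGen (fun a b : G ⧸ N =>
          (∃ l ∈ L, ∃ r ∈ R, b = ((l : G ⧸ N))⁻¹ * a * (r : G ⧸ N)) ∨
          (∃ l ∈ L, ∃ r ∈ R, a = ((l : G ⧸ N))⁻¹ * b * (r : G ⧸ N))) x y →
        ∀ g₀ : G, (g₀ : G ⧸ N) = x → ∃ g₁ : G, (g₁ : G ⧸ N) = y ∧ WeakConn L R g₀ g₁ := by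
      intro x y hxy
      induction hxy with
      | refl => exact fun g₀ h₀ => ⟨g₀, h₀, ReflTransGen.refl⟩
      | tail _ harc ih =>
        rename_i c b _
        intro g₀ h₀
        obtain ⟨g₁, hg₁, hpath⟩ := ih g₀ h₀
        rcases harc with ⟨l, hl, r, hr, hb⟩ | ⟨l, hl, r, hr, hc⟩
        · refine ⟨l⁻¹ * g₁ * r, ?_, hpath.tail (Or.inl ⟨l, hl, r, hr, rfl⟩)⟩
          rw [hb, ← hg₁]; simp
        · refine ⟨l * g₁ * r⁻¹, ?_, hpath.tail (Or.inr ⟨l, hl, r, hr, by group⟩)⟩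
          have : (b : G ⧸ N) = (l : G ⧸ N) * c * ((r : G ⧸ N))⁻¹ := by
            rw [hc]; group
          rw [this, ← hg₁]; simp
    -- connect g to 1 and h to 1
    have key : ∀ g₀ : G, WeakConn L R g₀ 1 := by
      intro g₀
      obtain ⟨g₁, hg₁, hpath⟩ := lift (g₀ : G ⧸ N) (1 : G ⧸ N) (hq _ _) g₀ rfl
      have hmem : g₁ ∈ N := (QuotientGroup.eq_one_iff g₁).mp hg₁
      exact hpath.trans (hN g₁ hmem)
    exact (key g).trans (hsym (key h))
end

section
/- Suppose W(L) and W(R) are subgroups of a group G, G = W(L)·W(R), and the minimum strong connection length k of G relative to (L,R) is finite. Then 2S(G;L,R) has exactly k strongly connected components, all of the same cardinality. -/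
open Relation Pointwise

section aux
variable {G : Type*} [Group G] {L R S : Set G}

lemma isWord_zero {w : G} (h : IsWord S 0 w) : w = 1 := by
  obtain ⟨l, hl, -, hp⟩ := h
  rw [List.length_eq_zero_iff] at hl; subst hl; simpa using hp.symm

lemma isWord_one (S : Set G) : IsWord S 0 (1 : G) := ⟨[], rfl, by simp, rfl⟩

lemma isWord_mul {a b : ℕ} {u v : G} (hu : IsWord S a u) (hv : IsWord S b v) :
    IsWord S (a + b) (u * v) := by
  obtain ⟨l1, h1, m1, p1⟩ := hu
  obtain ⟨l2, h2, m2, p2⟩ := hv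
  refine ⟨l1 ++ l2, by simp [h1, h2], ?_, by simp [p1, p2]⟩
  intro x hx
  rcases List.mem_append.1 hx with h | h
  exacts [m1 x h, m2 x h]

lemma isWord_inv {n : ℕ} {w : G} (h : IsWord S n w) : IsWord S⁻¹ n w⁻¹ := by
  obtain ⟨l, hl, hm, hp⟩ := h
  refine ⟨(l.map (·⁻¹)).reverse, by simp [hl], ?_, ?_⟩
  · intro x hx
    simp only [List.mem_reverse, List.mem_map] at hx
    obtain ⟨y, hy, rfl⟩ := hx
    exact Set.inv_mem_inv.2 (hm y hy)
  · rw [← hp, List.prod_inv_reverse]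

lemma isWord_inv' {n : ℕ} {w : G} (h : IsWord S⁻¹ n w) : IsWord S n w⁻¹ := by
  have := isWord_inv h
  rwa [inv_inv] at this

lemma isWord_pow {x : G} (hx : x ∈ S) (n : ℕ) : IsWord S n (x ^ n) :=
  ⟨List.replicate n x, by simp, by simp_all [List.eq_of_mem_replicate], by simp⟩

lemma isWord_single {x : G} (hx : x ∈ S) : IsWord S 1 x := by
  simpa using isWord_pow hx 1

end aux

section core
variable {G : Type*} [Group G] (L R : Set G)

/-- Level relation: `g = p⁻¹ q` with `p` an `L`-word of length `a`, `q` an `R`-word of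
length `b`, and `n = b - a`. -/
def Lev (g : G) (n : ℤ) : Prop :=
  ∃ (a b : ℕ) (p q : G), IsWord L a p ∧ IsWord R b q ∧ g = p⁻¹ * q ∧ n = (b : ℤ) - a

/-- Differences of lengths of common `L`/`R`-words. -/
def Mset : Set ℤ :=
  {n | ∃ (a b : ℕ) (v : G), IsWord L a v ∧ IsWord R b v ∧ n = (b : ℤ) - a}

variable {L R}

lemma Mset_zero : (0 : ℤ) ∈ Mset L R := ⟨0, 0, 1, isWord_one L, isWord_one R, by simp⟩

lemma Mset_add {m n : ℤ} (hm : m ∈ Mset L R) (hn : n ∈ Mset L R) : m + n ∈ Mset L R := by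
  obtain ⟨a, b, v, h1, h2, rfl⟩ := hm
  obtain ⟨a', b', v', h1', h2', rfl⟩ := hn
  exact ⟨a + a', b + b', v * v', isWord_mul h1 h1', isWord_mul h2 h2', by push_cast; ring⟩

lemma Mset_nsmul {n : ℤ} (hn : n ∈ Mset L R) : ∀ j : ℕ, (j : ℤ) * n ∈ Mset L R := by
  intro j
  induction j with
  | zero => simpa using Mset_zero
  | succ j ih =>
    have := Mset_add ih hn
    have heq : ((j:ℕ)+1 : ℤ) * n = (j:ℤ) * n + n := by ring
    push_cast
    rw [heq]; exact this
end core

section core2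
variable {G : Type*} [Group G] {L R : Set G}

lemma exists_one_word (hWL : ∃ H : Subgroup G, WordSet L = (H : Set G)) :
    ∃ c : ℕ, 0 < c ∧ IsWord L c (1 : G) := by
  obtain ⟨H, hH⟩ := hWL
  have : (1 : G) ∈ WordSet L := by rw [hH]; exact H.one_mem
  exact this

lemma exists_inv_word (hWL : ∃ H : Subgroup G, WordSet L = (H : Set G)) {a : ℕ} {u : G}
    (h : IsWord L a u) : ∃ a' : ℕ, IsWord L a' u⁻¹ := by
  rcases Nat.eq_zero_or_pos a with rfl | ha
  · rw [isWord_zero h]; exact ⟨0, by simpa using isWord_one L⟩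
  obtain ⟨H, hH⟩ := hWL
  have hu : u ∈ WordSet L := ⟨a, ha, h⟩
  rw [hH] at hu
  have : u⁻¹ ∈ WordSet L := by rw [hH]; exact H.inv_mem hu
  obtain ⟨a', -, h'⟩ := this
  exact ⟨a', h'⟩

lemma Mset_neg (hWL : ∃ H : Subgroup G, WordSet L = (H : Set G))
    (hWR : ∃ H : Subgroup G, WordSet R = (H : Set G))
    {n : ℤ} (hn : n ∈ Mset L R) : -n ∈ Mset L R := by
  obtain ⟨c, hc, hc1⟩ := exists_one_word hWL
  obtain ⟨d, hd, hd1⟩ := exists_one_word hWR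
  have hcM : -(c : ℤ) ∈ Mset L R := ⟨c, 0, 1, hc1, isWord_one R, by simp⟩
  have hdM : (d : ℤ) ∈ Mset L R := ⟨0, d, 1, isWord_one L, hd1, by simp⟩
  rcases le_or_gt 0 n with h0 | h0
  · have h1 : ((c - 1 : ℕ) : ℤ) * n ∈ Mset L R := Mset_nsmul hn (c - 1)
    have h2 : ((n.toNat : ℕ) : ℤ) * (-(c : ℤ)) ∈ Mset L R := Mset_nsmul hcM n.toNat
    have heq : -n = ((c - 1 : ℕ) : ℤ) * n + ((n.toNat : ℕ) : ℤ) * (-(c : ℤ)) := by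
      have : ((n.toNat : ℕ) : ℤ) = n := Int.toNat_of_nonneg h0
      rw [this]
      have : ((c - 1 : ℕ) : ℤ) = (c : ℤ) - 1 := by omega
      rw [this]; ring
    rw [heq]; exact Mset_add h1 h2
  · have h1 : ((d - 1 : ℕ) : ℤ) * n ∈ Mset L R := Mset_nsmul hn (d - 1)
    have h2 : (((-n).toNat : ℕ) : ℤ) * (d : ℤ) ∈ Mset L R := Mset_nsmul hdM (-n).toNat
    have heq : -n = ((d - 1 : ℕ) : ℤ) * n + (((-n).toNat : ℕ) : ℤ) * (d : ℤ) := by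
      have h3 : (((-n).toNat : ℕ) : ℤ) = -n := Int.toNat_of_nonneg (by omega)
      have h4 : ((d - 1 : ℕ) : ℤ) = (d : ℤ) - 1 := by omega
      rw [h3, h4]; ring
    rw [heq]; exact Mset_add h1 h2

lemma Mset_sub (hWL : ∃ H : Subgroup G, WordSet L = (H : Set G))
    (hWR : ∃ H : Subgroup G, WordSet R = (H : Set G))
    {m n : ℤ} (hm : m ∈ Mset L R) (hn : n ∈ Mset L R) : m - n ∈ Mset L R := by
  have := Mset_add hm (Mset_neg hWL hWR hn)
  simpa [sub_eq_add_neg] using this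

lemma Mset_int_mul (hWL : ∃ H : Subgroup G, WordSet L = (H : Set G))
    (hWR : ∃ H : Subgroup G, WordSet R = (H : Set G))
    {n : ℤ} (hn : n ∈ Mset L R) (j : ℤ) : j * n ∈ Mset L R := by
  rcases le_or_gt 0 j with h | h
  · have := Mset_nsmul hn j.toNat
    rwa [Int.toNat_of_nonneg h] at this
  · have := Mset_nsmul hn (-j).toNat
    rw [Int.toNat_of_nonneg (by omega)] at this
    have := Mset_neg hWL hWR this
    rwa [neg_mul, neg_neg] at this

end core2

section dpath
variable {G : Type*} [Group G] {L R : Set G}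

lemma dpath_of_lists : ∀ (lu lw : List G), lu.length = lw.length →
    (∀ x ∈ lu, x ∈ L) → (∀ x ∈ lw, x ∈ R) → ∀ g : G,
    DPath L R g (lu.prod⁻¹ * g * lw.prod) := by
  intro lu
  induction lu with
  | nil =>
    intro lw hlen _ _ g
    have : lw = [] := by
      rw [← List.length_eq_zero_iff]
      simpa using hlen.symm
    subst this
    simp only [List.prod_nil, inv_one, one_mul, mul_one]; exact ReflTransGen.refl
  | cons l tu ih =>
    intro lw hlen hmu hmw g
    cases lw with
    | nil => simp at hlen
    | cons w tw =>
      have harc : Arc L R g (l⁻¹ * g * w) :=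
        ⟨l, hmu l (by simp), w, hmw w (by simp), rfl⟩
      have hrest := ih tw (by simpa using hlen) (fun x hx => hmu x (by simp [hx]))
        (fun x hx => hmw x (by simp [hx])) (l⁻¹ * g * w)
      have heq : tu.prod⁻¹ * (l⁻¹ * g * w) * tw.prod
          = (l :: tu).prod⁻¹ * g * (w :: tw).prod := by
        simp [mul_assoc]
      rw [heq] at hrest
      exact ReflTransGen.head harc hrest

lemma dpath_of_words {n : ℕ} {u w g : G} (hu : IsWord L n u) (hw : IsWord R n w) :
    DPath L R g (u⁻¹ * g * w) := by
  obtain ⟨lu, hlu, hmu, rfl⟩ := hu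
  obtain ⟨lw, hlw, hmw, rfl⟩ := hw
  exact dpath_of_lists lu lw (by omega) hmu hmw g

lemma dpath_dec {g h : G} (hp : DPath L R g h) :
    ∃ (n : ℕ) (u w : G), IsWord L n u ∧ IsWord R n w ∧ h = u⁻¹ * g * w := by
  induction hp with
  | refl => exact ⟨0, 1, 1, isWord_one L, isWord_one R, by simp⟩
  | tail _ harc ih =>
    obtain ⟨n, u, w, hu, hw, rfl⟩ := ih
    obtain ⟨l, hl, r, hr, rfl⟩ := harc
    refine ⟨n + 1, u * l, w * r, isWord_mul hu (isWord_single hl),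
      isWord_mul hw (isWord_single hr), ?_⟩
    simp [mul_assoc]

end dpath

section lev
variable {G : Type*} [Group G] {L R : Set G}
variable (hWL : ∃ H : Subgroup G, WordSet L = (H : Set G))
variable (hWR : ∃ H : Subgroup G, WordSet R = (H : Set G))
include hWL hWR
set_option linter.unusedSectionVars false

lemma lev_exists (hG : WordSet L * WordSet R = Set.univ) (g : G) : ∃ n : ℤ, Lev L R g n := by
  have hg : g ∈ WordSet L * WordSet R := by rw [hG]; trivial
  obtain ⟨x, hx, y, hy, rfl⟩ := hg
  obtain ⟨a, -, hx'⟩ := hx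
  obtain ⟨b, -, hy'⟩ := hy
  obtain ⟨a', ha'⟩ := exists_inv_word hWL hx'
  exact ⟨(b : ℤ) - a', a', b, x⁻¹, y, ha', hy', by simp, rfl⟩

/-- Well-definedness of the level modulo `Mset`. -/
lemma lev_sub_mem {g : G} {m n : ℤ} (h1 : Lev L R g m) (h2 : Lev L R g n) :
    m - n ∈ Mset L R := by
  obtain ⟨a, b, p, q, hp, hq, rfl, rfl⟩ := h1
  obtain ⟨a', b', p', q', hp', hq', heq, rfl⟩ := h2
  obtain ⟨a2, hp2⟩ := exists_inv_word hWL hp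
  obtain ⟨b2, hq2⟩ := exists_inv_word hWR hq
  -- z = p' * p⁻¹ = q' * q⁻¹
  have hz : p' * p⁻¹ = q' * q⁻¹ := by
    have : p'⁻¹ * q' = p⁻¹ * q := heq.symm
    calc p' * p⁻¹ = p' * (p⁻¹ * q) * q⁻¹ * (q * q⁻¹) * 1 := by group
    _ = p' * (p'⁻¹ * q') * q⁻¹ := by rw [this]; group
    _ = q' * q⁻¹ := by group
  have hzL : IsWord L (a' + a2) (p' * p⁻¹) := isWord_mul hp' hp2
  have hzR : IsWord R (b' + b2) (p' * p⁻¹) := hz ▸ isWord_mul hq' hq2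
  have hzM : ((b' + b2 : ℕ) : ℤ) - ((a' + a2 : ℕ) : ℤ) ∈ Mset L R :=
    ⟨a' + a2, b' + b2, p' * p⁻¹, hzL, hzR, rfl⟩
  have h1L : IsWord L (a + a2) (1 : G) := by
    have := isWord_mul hp hp2; rwa [mul_inv_cancel] at this
  have h1R : IsWord R (b + b2) (1 : G) := by
    have := isWord_mul hq hq2; rwa [mul_inv_cancel] at this
  have hA : -((a + a2 : ℕ) : ℤ) ∈ Mset L R := ⟨a + a2, 0, 1, h1L, isWord_one R, by simp⟩
  have hB : ((b + b2 : ℕ) : ℤ) ∈ Mset L R := ⟨0, b + b2, 1, isWord_one L, h1R, by simp⟩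
  have key := Mset_add (Mset_add (Mset_neg hWL hWR hzM) hB) hA
  have : ((b : ℤ) - a) - ((b' : ℤ) - a') =
      -(((b' + b2 : ℕ) : ℤ) - ((a' + a2 : ℕ) : ℤ)) + ((b + b2 : ℕ) : ℤ) + -((a + a2 : ℕ) : ℤ) := by
    push_cast; ring
  rw [this]; exact key

/-- Sufficiency: equal level mod `Mset` implies a directed path. -/
lemma dpath_of_lev {g h : G} {m n : ℤ} (hg : Lev L R g m) (hh : Lev L R h n)
    (hmn : m - n ∈ Mset L R) : DPath L R g h := by
  obtain ⟨a, b, p, q, hp, hq, rfl, rfl⟩ := hg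
  obtain ⟨a', b', p', q', hp', hq', rfl, rfl⟩ := hh
  obtain ⟨a2, hp2⟩ := exists_inv_word hWL hp
  obtain ⟨b2, hq2⟩ := exists_inv_word hWR hq
  have h1L : IsWord L (a + a2) (1 : G) := by
    have := isWord_mul hp hp2; rwa [mul_inv_cancel] at this
  have h1R : IsWord R (b + b2) (1 : G) := by
    have := isWord_mul hq hq2; rwa [mul_inv_cancel] at this
  have hA : ((a + a2 : ℕ) : ℤ) ∈ Mset L R := by
    have : -((a + a2 : ℕ) : ℤ) ∈ Mset L R := ⟨a + a2, 0, 1, h1L, isWord_one R, by simp⟩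
    simpa using Mset_neg hWL hWR this
  have hB : -((b + b2 : ℕ) : ℤ) ∈ Mset L R := by
    have : ((b + b2 : ℕ) : ℤ) ∈ Mset L R := ⟨0, b + b2, 1, isWord_one L, h1R, by simp⟩
    simpa using Mset_neg hWL hWR this
  have ht : ((a2 + a' : ℕ) : ℤ) - ((b2 + b' : ℕ) : ℤ) ∈ Mset L R := by
    have key := Mset_add (Mset_add hA hB) hmn
    have : ((a2 + a' : ℕ) : ℤ) - ((b2 + b' : ℕ) : ℤ) =
        ((a + a2 : ℕ) : ℤ) + -((b + b2 : ℕ) : ℤ) + (((b : ℤ) - a) - ((b' : ℤ) - a')) := by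
      push_cast; ring
    rw [this]; exact key
  obtain ⟨α, β, v, hvL, hvR, hv⟩ := ht
  -- lengths: a2 + (α + a') = b2 + (β + b')
  have hlen : a2 + (α + a') = b2 + (β + b') := by
    have := hv
    push_cast at this
    omega
  have hU : IsWord L (a2 + (α + a')) (p⁻¹ * (v * p')) := isWord_mul hp2 (isWord_mul hvL hp')
  have hW : IsWord R (a2 + (α + a')) (q⁻¹ * (v * q')) := by
    rw [hlen]; exact isWord_mul hq2 (isWord_mul hvR hq')
  have hpath := dpath_of_words (g := p⁻¹ * q) hU hW
  have heq : (p⁻¹ * (v * p'))⁻¹ * (p⁻¹ * q) * (q⁻¹ * (v * q')) = p'⁻¹ * q' := by group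
  rwa [heq] at hpath

lemma strongConn_iff (hG : WordSet L * WordSet R = Set.univ) {g h : G} :
    StrongConn L R g h ↔ ∃ m n : ℤ, Lev L R g m ∧ Lev L R h n ∧ m - n ∈ Mset L R := by
  constructor
  · rintro ⟨h1, -⟩
    obtain ⟨n, U, W, hU, hW, rfl⟩ := dpath_dec h1
    obtain ⟨m, a, b, p, q, hp, hq, rfl, rfl⟩ := lev_exists hWL hWR hG g
    refine ⟨(b : ℤ) - a, (b : ℤ) - a, ⟨a, b, p, q, hp, hq, rfl, rfl⟩, ?_, by simpa using Mset_zero⟩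
    refine ⟨a + n, b + n, p * U, q * W, isWord_mul hp hU, isWord_mul hq hW, by group, by push_cast; ring⟩
  · rintro ⟨m, n, hm, hn, hmn⟩
    refine ⟨dpath_of_lev hWL hWR hm hn hmn, dpath_of_lev hWL hWR hn hm ?_⟩
    have := Mset_neg hWL hWR hmn
    simpa using this

/-- Levels of `L`-words: an `n`-letter `L`-word has level `n` mod `Mset`. -/
lemma lev_of_wordL {n : ℕ} {v : G} (hv : IsWord L n v) {m : ℤ} (hm : Lev L R v m) :
    m - n ∈ Mset L R := by
  obtain ⟨a2, hv2⟩ := exists_inv_word hWL hv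
  have hlev : Lev L R v (0 - (a2 : ℤ)) :=
    ⟨a2, 0, v⁻¹, 1, hv2, isWord_one R, by simp, by simp⟩
  have h1 := lev_sub_mem hWL hWR hm hlev
  have h1L : IsWord L (n + a2) (1 : G) := by
    have := isWord_mul hv hv2; rwa [mul_inv_cancel] at this
  have hA : ((n + a2 : ℕ) : ℤ) ∈ Mset L R := by
    have : -((n + a2 : ℕ) : ℤ) ∈ Mset L R := ⟨n + a2, 0, 1, h1L, isWord_one R, by simp⟩
    simpa using Mset_neg hWL hWR this
  have key := Mset_add h1 (Mset_neg hWL hWR hA)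
  have : m - (n : ℤ) = (m - (0 - (a2 : ℤ))) + -((n + a2 : ℕ) : ℤ) := by push_cast; ring
  rw [this]; exact key

/-- All levels are realized. -/
lemma lev_realize (hL : L.Nonempty) (hR : R.Nonempty) (n : ℤ) : ∃ g : G, Lev L R g n := by
  obtain ⟨l₀, hl₀⟩ := hL
  obtain ⟨r₀, hr₀⟩ := hR
  rcases le_or_gt 0 n with h | h
  · exact ⟨r₀ ^ n.toNat, 0, n.toNat, 1, r₀ ^ n.toNat, isWord_one L, isWord_pow hr₀ _,
      by simp, by simp [Int.toNat_of_nonneg h]⟩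
  · refine ⟨(l₀ ^ (-n).toNat)⁻¹, (-n).toNat, 0, l₀ ^ (-n).toNat, 1, isWord_pow hl₀ _,
      isWord_one R, by simp, ?_⟩
    rw [Int.toNat_of_nonneg (by omega)]
    push_cast; ring

/-- Shift of levels under two-sided translation. -/
lemma lev_shift {x : G} {s : ℤ} (hx : Lev L R x s) {i j : ℕ} {l₀ r₀ : G}
    (hl₀ : l₀ ∈ L) (hr₀ : r₀ ∈ R) :
    Lev L R ((l₀ ^ j)⁻¹ * x * r₀ ^ i) (s + (i : ℤ) - j) := by
  obtain ⟨a, b, p, q, hp, hq, rfl, rfl⟩ := hx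
  refine ⟨a + j, b + i, p * l₀ ^ j, q * r₀ ^ i, isWord_mul hp (isWord_pow hl₀ j),
    isWord_mul hq (isWord_pow hr₀ i), by group, by push_cast; ring⟩

end lev

theorem stmt_19 {G : Type*} [Group G] (L R : Set G) (hL : L.Nonempty) (hR : R.Nonempty)
    (hWL : ∃ H : Subgroup G, WordSet L = (H : Set G))
    (hWR : ∃ H : Subgroup G, WordSet R = (H : Set G))
    (hG : WordSet L * WordSet R = Set.univ)
    (k : ℕ)
    (hk : IsLeast {n : ℕ | 0 < n ∧ ∃ v : G,
        (IsWord L n v ∨ IsWord L⁻¹ n v ∨ IsWord R n v ∨ IsWord R⁻¹ n v) ∧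
        StrongConn L R v 1} k) :
    Nonempty ({C : Set G | ∃ g : G, C = {h | StrongConn L R g h}} ≃ Fin k) ∧
    ∀ C ∈ {C : Set G | ∃ g : G, C = {h | StrongConn L R g h}},
      ∀ D ∈ {C : Set G | ∃ g : G, C = {h | StrongConn L R g h}},
        Nonempty (C ≃ D) := by
  classical
  obtain ⟨l₀, hl₀⟩ := hL
  obtain ⟨r₀, hr₀⟩ := hR
  -- Step 1: the set in `hk` equals {n | 0 < n ∧ (n : ℤ) ∈ Mset L R}
  have hset : {n : ℕ | 0 < n ∧ ∃ v : G,
      (IsWord L n v ∨ IsWord L⁻¹ n v ∨ IsWord R n v ∨ IsWord R⁻¹ n v) ∧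
      StrongConn L R v 1} = {n : ℕ | 0 < n ∧ (n : ℤ) ∈ Mset L R} := by
    ext n
    simp only [Set.mem_setOf_eq]
    constructor
    · rintro ⟨hn, v, hv, hsc⟩
      refine ⟨hn, ?_⟩
      rcases hv with hvL | hvLi | hvR | hvRi
      · -- v is an L-word of length n; use DPath 1 v
        obtain ⟨m, U, W, hU, hW, hvw⟩ := dpath_dec hsc.2
        have hUv : IsWord L (m + n) (U * v) := isWord_mul hU hvL
        have hWeq : U * v = W := by rw [hvw]; group
        have : -(n : ℤ) ∈ Mset L R := by
          have : ((m : ℕ) : ℤ) - ((m + n : ℕ) : ℤ) ∈ Mset L R :=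
            ⟨m + n, m, U * v, hUv, hWeq ▸ hW, rfl⟩
          have heq : -(n : ℤ) = ((m : ℕ) : ℤ) - ((m + n : ℕ) : ℤ) := by push_cast; ring
          rw [heq]; exact this
        simpa using Mset_neg hWL hWR this
      · -- v is an L⁻¹-word; use DPath v 1
        have hvL' : IsWord L n v⁻¹ := isWord_inv' hvLi
        obtain ⟨m, U, W, hU, hW, hvw⟩ := dpath_dec hsc.1
        have hUv : IsWord L (n + m) (v⁻¹ * U) := isWord_mul hvL' hU
        have hWeq : v⁻¹ * U = W := by
          have h2 := congrArg (fun x : G => v⁻¹ * U * x) hvw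
          simpa [mul_assoc] using h2
        have : -(n : ℤ) ∈ Mset L R := by
          have : ((m : ℕ) : ℤ) - ((n + m : ℕ) : ℤ) ∈ Mset L R :=
            ⟨n + m, m, v⁻¹ * U, hUv, hWeq ▸ hW, rfl⟩
          have heq : -(n : ℤ) = ((m : ℕ) : ℤ) - ((n + m : ℕ) : ℤ) := by push_cast; ring
          rw [heq]; exact this
        simpa using Mset_neg hWL hWR this
      · -- v is an R-word; use DPath v 1
        obtain ⟨m, U, W, hU, hW, hvw⟩ := dpath_dec hsc.1
        have hvW : IsWord R (n + m) (v * W) := isWord_mul hvR hW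
        have hUeq : U = v * W := by
          have h2 := congrArg (fun x : G => U * x) hvw
          simpa [mul_assoc] using h2
        have : ((n + m : ℕ) : ℤ) - ((m : ℕ) : ℤ) ∈ Mset L R :=
          ⟨m, n + m, U, hU, hUeq ▸ hvW, rfl⟩
        have heq : (n : ℤ) = ((n + m : ℕ) : ℤ) - ((m : ℕ) : ℤ) := by push_cast; ring
        rw [heq]; exact this
      · -- v is an R⁻¹-word; use DPath 1 v
        have hvR' : IsWord R n v⁻¹ := isWord_inv' hvRi
        obtain ⟨m, U, W, hU, hW, hvw⟩ := dpath_dec hsc.2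
        have hWv : IsWord R (m + n) (W * v⁻¹) := isWord_mul hW hvR'
        have hUeq : U = W * v⁻¹ := by
          rw [hvw]; group
        have : ((m + n : ℕ) : ℤ) - ((m : ℕ) : ℤ) ∈ Mset L R :=
          ⟨m, m + n, U, hU, hUeq ▸ hWv, rfl⟩
        have heq : (n : ℤ) = ((m + n : ℕ) : ℤ) - ((m : ℕ) : ℤ) := by push_cast; ring
        rw [heq]; exact this
    · rintro ⟨hn, hnM⟩
      refine ⟨hn, l₀ ^ n, Or.inl (isWord_pow hl₀ n), ?_⟩
      rw [strongConn_iff hWL hWR hG]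
      obtain ⟨m, hm⟩ := lev_exists hWL hWR hG (l₀ ^ n)
      refine ⟨m, 0, hm, ⟨0, 0, 1, 1, isWord_one L, isWord_one R, by simp, by simp⟩, ?_⟩
      have h1 := lev_of_wordL hWL hWR (isWord_pow hl₀ n) hm
      have : m - 0 = (m - (n : ℤ)) + (n : ℤ) := by ring
      rw [this]; exact Mset_add h1 hnM
  rw [hset] at hk
  have hk0 : 0 < k := hk.1.1
  have hkM : (k : ℤ) ∈ Mset L R := hk.1.2
  haveI : NeZero k := ⟨hk0.ne'⟩
  -- Step 2: Mset L R = multiples of k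
  have hMk : ∀ z : ℤ, z ∈ Mset L R ↔ (k : ℤ) ∣ z := by
    intro z
    constructor
    · intro hz
      have hrM : z % (k : ℤ) ∈ Mset L R := by
        have hmul : (z / (k : ℤ)) * (k : ℤ) ∈ Mset L R := Mset_int_mul hWL hWR hkM _
        have : z % (k : ℤ) = z - (z / (k : ℤ)) * (k : ℤ) := by
          rw [Int.emod_def]; ring
        rw [this]
        exact Mset_sub hWL hWR hz hmul
      have hr0 : 0 ≤ z % (k : ℤ) := Int.emod_nonneg z (by exact_mod_cast hk0.ne')
      have hrk : z % (k : ℤ) < (k : ℤ) := Int.emod_lt_of_pos z (by exact_mod_cast hk0)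
      rcases eq_or_lt_of_le hr0 with heq | hlt
      · exact Int.dvd_of_emod_eq_zero heq.symm
      · exfalso
        have hmem : (z % (k : ℤ)).toNat ∈ {n : ℕ | 0 < n ∧ (n : ℤ) ∈ Mset L R} := by
          constructor
          · omega
          · rwa [Int.toNat_of_nonneg hr0]
        have := hk.2 hmem
        omega
    · rintro ⟨c, rfl⟩
      have := Mset_int_mul hWL hWR hkM c
      rwa [mul_comm] at this
  -- strong connectivity characterization
  have scc : ∀ g h : G, StrongConn L R g h ↔
      ∃ m n : ℤ, Lev L R g m ∧ Lev L R h n ∧ (k : ℤ) ∣ m - n := by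
    intro g h
    rw [strongConn_iff hWL hWR hG]
    constructor
    · rintro ⟨m, n, h1, h2, h3⟩; exact ⟨m, n, h1, h2, (hMk _).1 h3⟩
    · rintro ⟨m, n, h1, h2, h3⟩; exact ⟨m, n, h1, h2, (hMk _).2 h3⟩
  have sc_symm : ∀ {g h : G}, StrongConn L R g h → StrongConn L R h g :=
    fun h => ⟨h.2, h.1⟩
  have sc_trans : ∀ {g h x : G}, StrongConn L R g h → StrongConn L R h x →
      StrongConn L R g x := fun h1 h2 => ⟨h1.1.trans h2.1, h2.2.trans h1.2⟩
  have sc_refl : ∀ g : G, StrongConn L R g g := fun g => ⟨.refl, .refl⟩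
  choose lv hlv using lev_exists hWL hWR hG (G := G)
  constructor
  · -- number of components is k
    have base : ∀ C : ↥{C : Set G | ∃ g : G, C = {h | StrongConn L R g h}},
        ∃ g : G, (C : Set G) = {h | StrongConn L R g h} := fun C => C.2
    choose bp hbp using base
    set f : ↥{C : Set G | ∃ g : G, C = {h | StrongConn L R g h}} → ZMod k :=
      fun C => ((lv (bp C) : ℤ) : ZMod k) with hf
    have hinj : Function.Injective f := by
      intro C D hCD
      have hdvd : (k : ℤ) ∣ lv (bp C) - lv (bp D) := by
        rw [hf] at hCD
        simp only at hCD
        rw [ZMod.intCast_eq_intCast_iff] at hCD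
        exact Int.ModEq.dvd hCD.symm
      have hsc : StrongConn L R (bp C) (bp D) :=
        (scc _ _).2 ⟨lv (bp C), lv (bp D), hlv _, hlv _, hdvd⟩
      apply Subtype.ext
      rw [hbp C, hbp D]
      ext x
      simp only [Set.mem_setOf_eq]
      exact ⟨fun hx => sc_trans (sc_symm hsc) hx, fun hx => sc_trans hsc hx⟩
    have hsurj : Function.Surjective f := by
      intro x
      obtain ⟨z, rfl⟩ := ZMod.intCast_surjective x
      obtain ⟨g, hg⟩ := lev_realize hWL hWR ⟨l₀, hl₀⟩ ⟨r₀, hr₀⟩ z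
      refine ⟨⟨{h | StrongConn L R g h}, g, rfl⟩, ?_⟩
      set C : ↥{C : Set G | ∃ g : G, C = {h | StrongConn L R g h}} :=
        ⟨{h | StrongConn L R g h}, g, rfl⟩ with hC
      have hgC : StrongConn L R (bp C) g := by
        have h1 : g ∈ (C : Set G) := sc_refl g
        rw [hbp C] at h1
        exact h1
      obtain ⟨m1, n1, hm1, hn1, hd1⟩ := (scc _ _).1 hgC
      have hd2 : (k : ℤ) ∣ lv (bp C) - m1 := (hMk _).1 (lev_sub_mem hWL hWR (hlv _) hm1)
      have hd3 : (k : ℤ) ∣ n1 - z := (hMk _).1 (lev_sub_mem hWL hWR hn1 hg)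
      have hdvd : (k : ℤ) ∣ lv (bp C) - z := by
        have : lv (bp C) - z = (lv (bp C) - m1) + (m1 - n1) + (n1 - z) := by ring
        rw [this]
        exact dvd_add (dvd_add hd2 hd1) hd3
      rw [hf]
      simp only
      rw [ZMod.intCast_eq_intCast_iff]
      exact Int.ModEq.symm (Int.modEq_iff_dvd.2 hdvd)
    exact ⟨(Equiv.ofBijective f ⟨hinj, hsurj⟩).trans (Fintype.equivFinOfCardEq (ZMod.card k))⟩
  · -- all components have the same cardinality
    rintro C ⟨g, rfl⟩ D ⟨g', rfl⟩
    set i : ℕ := (lv g' - lv g).toNat with hi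
    set j : ℕ := (lv g - lv g').toNat with hj
    have hij : (i : ℤ) - j = lv g' - lv g := by
      rw [hi, hj]; omega
    have key : ∀ x : G, StrongConn L R g x ↔
        StrongConn L R g' ((l₀ ^ j)⁻¹ * x * r₀ ^ i) := by
      intro x
      constructor
      · intro hx
        obtain ⟨m1, n1, hm1, hn1, hd1⟩ := (scc _ _).1 hx
        have hshift := lev_shift hWL hWR hn1 hl₀ hr₀ (i := i) (j := j)
        refine (scc _ _).2 ⟨lv g', n1 + i - j, hlv g', hshift, ?_⟩
        have hd2 : (k : ℤ) ∣ lv g - m1 := (hMk _).1 (lev_sub_mem hWL hWR (hlv g) hm1)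
        have heq : lv g' - (n1 + (i : ℤ) - j) = (lv g - m1) + (m1 - n1) := by omega
        rw [heq]
        exact dvd_add hd2 hd1
      · intro hy
        obtain ⟨m2, n2, hm2, hn2, hd2⟩ := (scc _ _).1 hy
        have hshift := lev_shift hWL hWR (hlv x) hl₀ hr₀ (i := i) (j := j)
        have hd3 : (k : ℤ) ∣ n2 - (lv x + (i : ℤ) - j) :=
          (hMk _).1 (lev_sub_mem hWL hWR hn2 hshift)
        have hd4 : (k : ℤ) ∣ lv g' - m2 := (hMk _).1 (lev_sub_mem hWL hWR (hlv g') hm2)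
        refine (scc _ _).2 ⟨lv g, lv x, hlv g, hlv x, ?_⟩
        have hd5 : (k : ℤ) ∣ lv g - lv g' + (i - j) := by
          rw [hij]
          simp
        have heq : lv g - lv x = (lv g' - m2) + (m2 - n2) + (n2 - (lv x + (i : ℤ) - j))
            + (lv g - lv g' + ((i : ℤ) - j)) := by ring
        rw [heq]
        exact dvd_add (dvd_add (dvd_add hd4 hd2) hd3) hd5
    exact ⟨Equiv.subtypeEquiv ((Equiv.mulLeft ((l₀ ^ j)⁻¹)).trans (Equiv.mulRight (r₀ ^ i)))
      (fun x => by simpa using key x)⟩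
end
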